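/- Let h : ℝ → ℝ be differentiable, let λ ≥ 0 and T ≥ 0, and suppose h(0) > 0 and that for every t ∈ [0, T] with h(t) ≥ 0 one has (deriv h) t ≥ -λ · h(t) (the derivative condition is only assumed on the set where h is nonnegative). Then h(t) ≥ h(0) · exp(-λ t) for every t ∈ [0, T]; in particular h(t) > 0 for every t ∈ [0, T]. -/

import Mathlib

open Set Real

private lemma cbf_aux (h : ℝ → ℝ) (hdiff : Differentiable ℝ h)
    (lam T : ℝ) (hlam : 0 ≤ lam)
    (hcond : ∀ t ∈ Set.Icc (0 : ℝ) T, h t ≥ 0 → deriv h t ≥ -lam * h t)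
    (b : ℝ) (hb : b ∈ Set.Icc (0 : ℝ) T)
    (hpos : ∀ s ∈ Set.Icc (0 : ℝ) b, h s ≥ 0) :
    ∀ t ∈ Set.Icc (0 : ℝ) b, h t ≥ h 0 * Real.exp (-lam * t) := by
  set f : ℝ → ℝ := fun t => h 0 * Real.exp (-lam * t) - h t with hf
  set f' : ℝ → ℝ := fun t => h 0 * (Real.exp (-lam * t) * (-lam)) - deriv h t with hf'
  have hfd : ∀ x, HasDerivAt f (f' x) x := by
    intro x
    exact (((Real.hasDerivAt_exp (-lam * x)).comp x
      ((hasDerivAt_id x).const_mul (-lam))).const_mul (h 0)).sub (hdiff x).hasDerivAt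
      |>.congr_deriv (by ring)
  have key : ∀ x ∈ Set.Icc (0:ℝ) b, f x ≤ gronwallBound 0 (-lam) 0 (x - 0) := by
    apply le_gronwallBound_of_liminf_deriv_right_le
      (f' := f') (Continuous.continuousOn (continuous_iff_continuousAt.2 fun x => (hfd x).continuousAt))
    · intro x hx r hr
      exact ((hfd x).hasDerivWithinAt (s := Set.Ici x)).liminf_right_slope_le hr
    · simp [f]
    · intro x hx
      have hx' : x ∈ Set.Icc (0:ℝ) T := ⟨hx.1, le_trans (le_of_lt hx.2) hb.2⟩
      have hhx : h x ≥ 0 := hpos x ⟨hx.1, le_of_lt hx.2⟩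
      have hd := hcond x hx' hhx
      simp only [f', f]
      nlinarith [hd]
  intro t ht
  have := key t ht
  rw [gronwallBound_ε0] at this
  simp only [f] at this
  nlinarith [this]

/-- Exponential lower bound when the linear CBF derivative condition
`h' t ≥ -λ * h t` is only assumed on the superlevel set `{h ≥ 0}`: if `h` is
differentiable with `h 0 > 0`, then `h t ≥ h 0 * exp (-λ * t)` on `[0, T]`;
in particular `h t > 0` on `[0, T]`. -/
theorem cbf_linear_gronwall_superlevel (h : ℝ → ℝ) (hdiff : Differentiable ℝ h)
    (lam T : ℝ) (hlam : 0 ≤ lam) (hT : 0 ≤ T) (h0 : h 0 > 0)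
    (hcond : ∀ t ∈ Set.Icc (0 : ℝ) T, h t ≥ 0 → deriv h t ≥ -lam * h t) :
    ∀ t ∈ Set.Icc (0 : ℝ) T, h t ≥ h 0 * Real.exp (-lam * t) ∧ h t > 0 := by
  -- First show h ≥ 0 on all of [0,T].
  have hnonneg : ∀ t ∈ Set.Icc (0:ℝ) T, h t ≥ 0 := by
    by_contra hcon
    push_neg at hcon
    obtain ⟨t₀, ht₀, hneg⟩ := hcon
    set S : Set ℝ := {s | s ∈ Set.Icc (0:ℝ) T ∧ h s ≤ 0} with hS
    have hSne : S.Nonempty := ⟨t₀, ht₀, le_of_lt hneg⟩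
    have hSclosed : IsClosed S :=
      (isClosed_Icc.inter (isClosed_le hdiff.continuous continuous_const) : _)
    have hSbdd : BddBelow S := ⟨0, fun s hs => hs.1.1⟩
    set c := sInf S with hc
    have hcS : c ∈ S := hSclosed.csInf_mem hSne hSbdd
    have hcpos : ∀ s ∈ Set.Ico (0:ℝ) c, 0 < h s := by
      intro s hs
      by_contra hsn
      push_neg at hsn
      have : s ∈ S := ⟨⟨hs.1, le_trans (le_of_lt hs.2) hcS.1.2⟩, hsn⟩
      exact absurd (csInf_le hSbdd this) (not_le.mpr hs.2)
    have hc0 : 0 < c := by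
      rcases lt_or_eq_of_le hcS.1.1 with h1 | h1
      · exact h1
      · exact absurd hcS.2 (not_le.mpr (h1 ▸ h0))
    have hhc : (0:ℝ) ≤ h c := by
      have hcw : ContinuousWithinAt h (Set.Ico 0 c) c :=
        hdiff.continuous.continuousWithinAt
      have hmem : c ∈ closure (Set.Ico (0:ℝ) c) := by
        rw [closure_Ico (ne_of_lt hc0)]
        exact ⟨le_of_lt hc0, le_refl c⟩
      exact ContinuousWithinAt.closure_le (f := fun _ => (0:ℝ)) (g := h)
        hmem continuousWithinAt_const hcw
        (fun x hx => le_of_lt (hcpos x hx))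
    have hcnn : ∀ s ∈ Set.Icc (0:ℝ) c, h s ≥ 0 := by
      intro s hs
      rcases lt_or_eq_of_le hs.2 with h1 | h1
      · exact le_of_lt (hcpos s ⟨hs.1, h1⟩)
      · exact h1 ▸ hhc
    have := cbf_aux h hdiff lam T hlam hcond c hcS.1 hcnn c ⟨le_of_lt hc0, le_refl c⟩
    nlinarith [Real.exp_pos (-lam * c), hcS.2]
  intro t ht
  have hmain := cbf_aux h hdiff lam T hlam hcond T ⟨hT, le_refl T⟩ hnonneg t ht
  exact ⟨hmain, lt_of_lt_of_le (by positivity) hmain⟩
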